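/- Let E ⊆ ℝ² be an open and connected subset (with its subspace topology), and let p₁,…,p_k ∈ E and q₁,…,q_k ∈ E be two lists of points such that p₁,…,p_k are pairwise distinct and q₁,…,q_k are pairwise distinct. Then there exists a homeomorphism F : E → E such that F(pᵢ) = qᵢ for every 1 ≤ i ≤ k. -/

import Mathlib

open Set Metric

local notation "X" => EuclideanSpace ℝ (Fin 2)

/-- Ball move: a homeomorphism of the plane, identity outside `ball c r`, mapping
`c` to any given `b ∈ ball c r`, and mapping the ball into itself. -/
lemma exists_moveHomeo (c b : X) (r : ℝ) (hr : 0 < r) (hb : b ∈ ball c r) :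
    ∃ F : X ≃ₜ X, F c = b ∧ (∀ x, x ∉ ball c r → F x = x) ∧
      Set.MapsTo F (ball c r) (ball c r) := by
  set v : X := b - c with hv_def
  have hv : ‖v‖ < r := by
    have := mem_ball.1 hb
    rwa [dist_eq_norm] at this
  have hv0 : 0 ≤ ‖v‖ := norm_nonneg _
  set t : X → ℝ := fun x => max (1 - ‖x - c‖ / r) 0 with ht_def
  set g : X → X := fun x => x + t x • v with hg_def
  have ht01 : ∀ x, 0 ≤ t x ∧ t x ≤ 1 := by
    intro x
    refine ⟨le_max_right _ _, max_le ?_ (by norm_num)⟩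
    have : 0 ≤ ‖x - c‖ / r := by positivity
    linarith
  have htlip : ∀ x y, |t x - t y| ≤ ‖x - y‖ / r := by
    intro x y
    have h1 : |t x - t y| ≤ |(1 - ‖x - c‖ / r) - (1 - ‖y - c‖ / r)| :=
      abs_max_sub_max_le_abs _ _ _
    have h2 : (1 - ‖x - c‖ / r) - (1 - ‖y - c‖ / r) = (‖y - c‖ - ‖x - c‖) / r := by ring
    rw [h2, abs_div, abs_of_pos hr] at h1
    have h3 : |‖y - c‖ - ‖x - c‖| ≤ ‖x - y‖ :=
      calc |‖y - c‖ - ‖x - c‖| ≤ ‖(y - c) - (x - c)‖ := abs_norm_sub_norm_le _ _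
        _ = ‖x - y‖ := by rw [show (y - c) - (x - c) = -(x - y) by abel, norm_neg]
    exact h1.trans (by gcongr)
  have hinj : Function.Injective g := by
    intro x y hxy
    by_contra hne
    have h : x - y = (t y - t x) • v := by
      rw [sub_smul]
      calc x - y = (x + t x • v) - y - t x • v := by abel
        _ = (y + t y • v) - y - t x • v := by rw [show x + t x • v = y + t y • v from hxy]
        _ = t y • v - t x • v := by abel
    have hnorm : ‖x - y‖ = |t y - t x| * ‖v‖ := by rw [h, norm_smul, Real.norm_eq_abs]
    have h2 : |t y - t x| ≤ ‖x - y‖ / r := by rw [abs_sub_comm]; exact htlip x y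
    have hpos : 0 < ‖x - y‖ := by
      rw [norm_pos_iff]; exact sub_ne_zero.2 hne
    have : ‖x - y‖ ≤ ‖x - y‖ / r * ‖v‖ := by
      calc ‖x - y‖ = |t y - t x| * ‖v‖ := hnorm
        _ ≤ ‖x - y‖ / r * ‖v‖ := mul_le_mul_of_nonneg_right h2 hv0
    rw [div_mul_eq_mul_div, le_div_iff₀ hr] at this
    nlinarith
  have hsurj : Function.Surjective g := by
    intro z
    set h : ℝ → ℝ := fun s => max (1 - ‖z - s • v - c‖ / r) 0 with hh_def
    have hcont : ContinuousOn (fun s => h s - s) (Icc 0 1) := by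
      apply Continuous.continuousOn
      exact ((continuous_const.sub ((((continuous_const.sub
        (continuous_id.smul continuous_const)).sub continuous_const).norm).div_const r)).max
        continuous_const).sub continuous_id
    have h0 : 0 ≤ h 0 - 0 := by simp [hh_def, le_max_iff]
    have h1 : h 1 - 1 ≤ 0 := by
      have hnn : 0 ≤ ‖z - (1:ℝ) • v - c‖ / r := by positivity
      have : h 1 ≤ 1 := max_le (by linarith) (by norm_num)
      linarith
    obtain ⟨s, hs_mem, hs⟩ : ∃ s ∈ Icc (0:ℝ) 1, h s - s = 0 := by
      have := intermediate_value_Icc' (by norm_num : (0:ℝ) ≤ 1) hcont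
      have h0mem : (0:ℝ) ∈ Icc (h 1 - 1) (h 0 - 0) := ⟨h1, h0⟩
      obtain ⟨s, hs1, hs2⟩ := this h0mem
      exact ⟨s, hs1, hs2⟩
    refine ⟨z - s • v, ?_⟩
    have hts : t (z - s • v) = s := by
      have : t (z - s • v) = h s := by simp [ht_def, hh_def]
      rw [this]; linarith [hs]
    simp only [hg_def, hts]
    abel
  have hcont : Continuous g := by
    apply continuous_id.add
    refine Continuous.smul (f := t) (g := fun _ => v) ?_ continuous_const
    exact (continuous_const.sub (((continuous_id.sub continuous_const).norm).div_const r)).max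
      continuous_const
  have hclosed : IsClosedMap g := by
    have hproper : IsProperMap g := by
      rw [isProperMap_iff_isCompact_preimage]
      refine ⟨hcont, fun K hK => ?_⟩
      apply Metric.isCompact_of_isClosed_isBounded (hK.isClosed.preimage hcont)
      obtain ⟨R, hR⟩ := (isBounded_iff_forall_norm_le).1 hK.isBounded
      rw [isBounded_iff_forall_norm_le]
      refine ⟨R + ‖v‖, fun x hx => ?_⟩
      have h1 : ‖g x‖ ≤ R := hR _ hx
      have h2 : ‖x‖ ≤ ‖g x‖ + ‖t x • v‖ := by
        calc ‖x‖ = ‖g x - t x • v‖ := by simp [hg_def]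
          _ ≤ ‖g x‖ + ‖t x • v‖ := norm_sub_le _ _
      have h3 : ‖t x • v‖ ≤ ‖v‖ := by
        rw [norm_smul, Real.norm_eq_abs, abs_of_nonneg (ht01 x).1]
        nlinarith [(ht01 x).1, (ht01 x).2, hv0]
      linarith
    exact hproper.isClosedMap
  have hbij : Function.Bijective g := ⟨hinj, hsurj⟩
  have hopen : IsOpenMap g := by
    intro U hU
    rw [← compl_compl U, Set.image_compl_eq hbij]
    exact (hclosed _ hU.isClosed_compl).isOpen_compl
  refine ⟨Equiv.toHomeomorphOfContinuousOpen (Equiv.ofBijective g hbij) hcont hopen, ?_, ?_, ?_⟩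
  · show g c = b
    simp [hg_def, ht_def, hv_def]
  · intro x hx
    show g x = x
    have hxr : r ≤ ‖x - c‖ := by
      rw [mem_ball, dist_eq_norm, not_lt] at hx
      exact hx
    have : t x = 0 := by
      apply max_eq_right
      rw [sub_nonpos, le_div_iff₀ hr]
      linarith
    simp [hg_def, this]
  · intro x hx
    show g x ∈ ball c r
    rw [mem_ball, dist_eq_norm] at hx ⊢
    have htx : t x = 1 - ‖x - c‖ / r := by
      apply max_eq_left
      have : ‖x - c‖ / r < 1 := by rw [div_lt_one hr]; exact hx
      linarith
    have h1 : ‖g x - c‖ ≤ ‖x - c‖ + t x * ‖v‖ := by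
      calc ‖g x - c‖ = ‖(x - c) + t x • v‖ := by rw [hg_def]; ring_nf; rw [show x + t x • v - c = (x - c) + t x • v by abel]
        _ ≤ ‖x - c‖ + ‖t x • v‖ := norm_add_le _ _
        _ = ‖x - c‖ + t x * ‖v‖ := by rw [norm_smul, Real.norm_eq_abs, abs_of_nonneg (ht01 x).1]
    have hs : 0 ≤ ‖x - c‖ := norm_nonneg _
    have key : ‖x - c‖ + t x * ‖v‖ < r := by
      rw [htx]
      have hfac : 0 < 1 - ‖x - c‖ / r := by
        have : ‖x - c‖ / r < 1 := by rw [div_lt_one hr]; exact hx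
        linarith
      have hlt : (1 - ‖x - c‖ / r) * ‖v‖ < (1 - ‖x - c‖ / r) * r :=
        mul_lt_mul_of_pos_left hv hfac
      have heq : ‖x - c‖ + (1 - ‖x - c‖ / r) * r = r := by field_simp; ring
      linarith
    linarith

lemma one_lt_rank_X : (1 : Cardinal) < Module.rank ℝ X := by
  have h : Module.finrank ℝ (EuclideanSpace ℝ (Fin 2)) = 2 := finrank_euclideanSpace_fin
  have h2 : Module.rank ℝ (EuclideanSpace ℝ (Fin 2)) = 2 := by
    rw [← Module.finrank_eq_rank, h]; norm_num
  rw [h2]; norm_num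

/-- A punctured ball in the plane is path-connected. -/
lemma isPathConnected_ball_diff_singleton (c : X) (r : ℝ) (hr : 0 < r) (s : X) :
    IsPathConnected (ball c r \ {s}) := by
  -- first: the punctured unit ball
  have hunit : ∀ w : X, IsPathConnected (ball (0 : X) 1 \ {w}) := by
    intro w
    by_cases hw : w ∈ ball (0 : X) 1
    · -- transport along `Homeomorph.unitBall`
      set φ : X ≃ₜ ball (0 : X) 1 := Homeomorph.unitBall
      set z : X := φ.symm ⟨w, hw⟩ with hz
      have hpc : IsPathConnected ({z}ᶜ : Set X) :=
        isPathConnected_compl_singleton_of_one_lt_rank one_lt_rank_X z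
      have himg : IsPathConnected ((Subtype.val ∘ φ) '' ({z}ᶜ)) :=
        hpc.image (continuous_subtype_val.comp φ.continuous)
      convert himg using 1
      ext y
      simp only [Set.mem_image, Function.comp_apply, Set.mem_diff, Set.mem_singleton_iff,
        Set.mem_compl_iff]
      constructor
      · rintro ⟨hy, hyw⟩
        refine ⟨φ.symm ⟨y, hy⟩, ?_, by simp⟩
        intro hcontra
        apply hyw
        have := congrArg (fun a => ((φ a : ball (0:X) 1) : X)) hcontra
        simpa [hz] using this
      · rintro ⟨a, ha, rfl⟩
        refine ⟨(φ a).2, ?_⟩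
        intro hcontra
        apply ha
        rw [hz]
        have : φ a = ⟨w, hw⟩ := Subtype.ext hcontra
        rw [← this, Homeomorph.symm_apply_apply]
    · have : ball (0 : X) 1 \ {w} = ball (0 : X) 1 := by
        ext y; simp only [Set.mem_diff, Set.mem_singleton_iff]
        exact ⟨fun h => h.1, fun h => ⟨h, fun he => hw (he ▸ h)⟩⟩
      rw [this]
      exact (convex_ball (0:X) 1).isPathConnected (Metric.nonempty_ball.mpr one_pos)
  -- now transport via the affine map `y ↦ c + r • y`
  set f : X → X := fun y => c + r • y with hf
  have hcont : Continuous f := continuous_const.add (Continuous.smul (f := fun _ : X => r) continuous_const continuous_id)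
  set z : X := r⁻¹ • (s - c) with hz
  have himg : f '' (ball (0:X) 1 \ {z}) = ball c r \ {s} := by
    ext y
    simp only [Set.mem_image, Set.mem_diff, Set.mem_singleton_iff, hf]
    constructor
    · rintro ⟨a, ⟨ha, haz⟩, rfl⟩
      refine ⟨?_, ?_⟩
      · rw [mem_ball, dist_eq_norm] at ha ⊢
        have : c + r • a - c = r • a := by abel
        rw [this, norm_smul, Real.norm_eq_abs, abs_of_pos hr]
        simpa using (mul_lt_mul_of_pos_left ha hr)
      · intro hcontra
        apply haz
        rw [hz, ← hcontra]
        have : c + r • a - c = r • a := by abel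
        rw [this, smul_smul, inv_mul_cancel₀ hr.ne', one_smul]
    · rintro ⟨hy, hys⟩
      refine ⟨r⁻¹ • (y - c), ⟨?_, ?_⟩, ?_⟩
      · rw [mem_ball, dist_eq_norm] at hy ⊢
        simp only [sub_zero, norm_smul, Real.norm_eq_abs, abs_of_pos (inv_pos.2 hr)]
        rw [inv_mul_lt_iff₀ hr, mul_one]
        exact hy
      · intro hcontra
        apply hys
        have h2 := congrArg (fun a => c + r • a) hcontra
        rw [smul_smul, mul_inv_cancel₀ hr.ne', one_smul] at h2
        have h3 : c + (y - c) = y := by abel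
        rw [h3, hz, smul_smul, mul_inv_cancel₀ hr.ne', one_smul] at h2
        rw [h2]; abel
      · simp [smul_smul, mul_inv_cancel₀ hr.ne']
  rw [← himg]
  exact (hunit z).image hcont

/-- Removing a point from an open preconnected planar set keeps it preconnected. -/
lemma isPreconnected_diff_singleton {U : Set X} (hU_open : IsOpen U)
    (hU : IsPreconnected U) (x : X) : IsPreconnected (U \ {x}) := by
  by_cases hx : x ∈ U
  · rintro u v hu hv hcover ⟨a, ha⟩ ⟨b, hb⟩
    obtain ⟨r, hr, hball⟩ := Metric.isOpen_iff.1 hU_open x hx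
    have hP : IsPathConnected (ball x r \ {x}) := isPathConnected_ball_diff_singleton x r hr x
    have hPconn : IsPreconnected (ball x r \ {x}) := hP.isConnected.isPreconnected
    have hPsub : ball x r \ {x} ⊆ U \ {x} := Set.diff_subset_diff_left hball
    have hPuv : ball x r \ {x} ⊆ u ∪ v := hPsub.trans hcover
    -- x is not in both u and v simultaneously "freely"; key case analysis
    by_cases hPu : ((ball x r \ {x}) ∩ u).Nonempty
    · by_cases hPv : ((ball x r \ {x}) ∩ v).Nonempty
      · obtain ⟨y, hy⟩ := hPconn u v hu hv hPuv hPu hPv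
        exact ⟨y, ⟨hPsub hy.1, hy.2⟩⟩
      · -- punctured ball misses v entirely, so it lies in u
        have hPu' : ball x r \ {x} ⊆ u := by
          intro y hy
          rcases hPuv hy with h | h
          · exact h
          · exact absurd ⟨y, hy, h⟩ hPv
        -- x cannot be in v: else a small punctured ball meets v
        have hxv : x ∉ v := by
          intro hxv
          obtain ⟨r', hr', hball'⟩ := Metric.isOpen_iff.1 hv x hxv
          set r'' := min r r' with hr''
          have hr''pos : 0 < r'' := lt_min hr hr'
          obtain ⟨y, hy⟩ := (isPathConnected_ball_diff_singleton x r'' hr''pos x).isConnected.nonempty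
          have hyy : y ∈ ball x r \ {x} :=
            ⟨ball_subset_ball (min_le_left _ _) hy.1, hy.2⟩
          exact hPv ⟨y, hyy, hball' (ball_subset_ball (min_le_right _ _) hy.1)⟩
        -- apply preconnectedness of U to (u ∪ ball x r) and v
        have hcover' : U ⊆ (u ∪ ball x r) ∪ v := by
          intro y hy
          by_cases hyx : y = x
          · exact Or.inl (Or.inr (hyx ▸ mem_ball_self hr))
          · rcases hcover ⟨hy, hyx⟩ with h | h
            · exact Or.inl (Or.inl h)
            · exact Or.inr h
        have hUu : (U ∩ (u ∪ ball x r)).Nonempty := ⟨a, ha.1.1, Or.inl ha.2⟩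
        have hUv : (U ∩ v).Nonempty := ⟨b, hb.1.1, hb.2⟩
        obtain ⟨y, hyU, hyu, hyv⟩ := hU (u ∪ ball x r) v (hu.union isOpen_ball) hv
          hcover' hUu hUv
        have hyx : y ≠ x := fun he => hxv (he ▸ hyv)
        rcases hyu with h | h
        · exact ⟨y, ⟨hyU, hyx⟩, h, hyv⟩
        · exact ⟨y, ⟨hyU, hyx⟩, hPu' ⟨h, hyx⟩, hyv⟩
    · -- punctured ball misses u entirely, so it lies in v
      have hPv' : ball x r \ {x} ⊆ v := by
        intro y hy
        rcases hPuv hy with h | h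
        · exact absurd ⟨y, hy, h⟩ hPu
        · exact h
      have hxu : x ∉ u := by
        intro hxu
        obtain ⟨r', hr', hball'⟩ := Metric.isOpen_iff.1 hu x hxu
        set r'' := min r r' with hr''
        have hr''pos : 0 < r'' := lt_min hr hr'
        obtain ⟨y, hy⟩ :=
          (isPathConnected_ball_diff_singleton x r'' hr''pos x).isConnected.nonempty
        have hyy : y ∈ ball x r \ {x} :=
          ⟨ball_subset_ball (min_le_left _ _) hy.1, hy.2⟩
        exact hPu ⟨y, hyy, hball' (ball_subset_ball (min_le_right _ _) hy.1)⟩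
      have hcover' : U ⊆ u ∪ (v ∪ ball x r) := by
        intro y hy
        by_cases hyx : y = x
        · exact Or.inr (Or.inr (hyx ▸ mem_ball_self hr))
        · rcases hcover ⟨hy, hyx⟩ with h | h
          · exact Or.inl h
          · exact Or.inr (Or.inl h)
      have hUu : (U ∩ u).Nonempty := ⟨a, ha.1.1, ha.2⟩
      have hUv : (U ∩ (v ∪ ball x r)).Nonempty := ⟨b, hb.1.1, Or.inl hb.2⟩
      obtain ⟨y, hyU, hyu, hyv⟩ := hU u (v ∪ ball x r) hu (hv.union isOpen_ball)
        hcover' hUu hUv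
      have hyx : y ≠ x := fun he => hxu (he ▸ hyu)
      rcases hyv with h | h
      · exact ⟨y, ⟨hyU, hyx⟩, hyu, h⟩
      · exact ⟨y, ⟨hyU, hyx⟩, hyu, hPv' ⟨h, hyx⟩⟩
  · have : U \ {x} = U := by
      ext y; simp only [Set.mem_diff, Set.mem_singleton_iff]
      exact ⟨fun h => h.1, fun h => ⟨h, fun he => hx (he ▸ h)⟩⟩
    rw [this]; exact hU

/-- Removing a finite set from an open preconnected planar set keeps it preconnected. -/
lemma isPreconnected_diff_finite {U : Set X} (hU_open : IsOpen U)
    (hU : IsPreconnected U) {S : Set X} (hS : S.Finite) : IsPreconnected (U \ S) := by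
  refine Set.Finite.induction_on S hS (by simpa using hU) ?_
  intro x S hxS hSfin ih
  · have h1 : U \ insert x S = (U \ S) \ {x} := by
      ext y
      simp only [Set.mem_diff, Set.mem_insert_iff, Set.mem_singleton_iff]
      tauto
    rw [h1]
    exact isPreconnected_diff_singleton (hU_open.sdiff hSfin.isClosed) ih x

/-- Restrict a ball-supported homeomorphism of the plane to a homeomorphism of `E`. -/
lemma restrictHomeo {E B : Set X} (hBE : B ⊆ E) (F : X ≃ₜ X)
    (hfix : ∀ x, x ∉ B → F x = x) (hmaps : Set.MapsTo F B B) :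
    ∃ G : E ≃ₜ E, (∀ z : X, (hz : z ∈ E) → (G ⟨z, hz⟩ : X) = F z) := by
  have hiff : ∀ x, x ∈ E ↔ F x ∈ E := by
    intro x
    constructor
    · intro hx
      by_cases hxB : x ∈ B
      · exact hBE (hmaps hxB)
      · rw [hfix x hxB]; exact hx
    · intro hFx
      by_cases hxB : x ∈ B
      · exact hBE hxB
      · rw [← hfix x hxB]; exact hFx
  exact ⟨F.subtype hiff, fun z hz => rfl⟩

/-- Given an open set `E` and finite `S` with `E \ S` preconnected, any point of `E \ S`
can be moved to any other by a homeomorphism of `E` fixing `S` pointwise. -/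
lemma exists_homeo_fixing {E : Set X} (hE_open : IsOpen E) {S : Set X} (hS_fin : S.Finite)
    (hconn : IsPreconnected (E \ S)) {x y : X} (hx : x ∈ E \ S) (hy : y ∈ E \ S) :
    ∃ F : E ≃ₜ E, (F ⟨x, hx.1⟩ : X) = y ∧
      ∀ z : X, ∀ hz : z ∈ E, z ∈ S → (F ⟨z, hz⟩ : X) = z := by
  have hES_open : IsOpen (E \ S) := hE_open.sdiff hS_fin.isClosed
  -- local moves
  have hloc : ∀ a, ∀ ha : a ∈ E \ S, ∃ ε > 0, ball a ε ⊆ E \ S ∧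
      ∀ b ∈ ball a ε, ∃ G : E ≃ₜ E, (G ⟨a, ha.1⟩ : X) = b ∧
        ∀ z : X, ∀ hz : z ∈ E, z ∉ ball a ε → (G ⟨z, hz⟩ : X) = z := by
    intro a ha
    obtain ⟨ε, hε, hball⟩ := Metric.isOpen_iff.1 hES_open a ha
    refine ⟨ε, hε, hball, fun b hb => ?_⟩
    obtain ⟨F, hFc, hFfix, hFmaps⟩ := exists_moveHomeo a b ε hε hb
    have hBE : ball a ε ⊆ E := hball.trans Set.diff_subset
    obtain ⟨G, hG⟩ := restrictHomeo hBE F hFfix hFmaps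
    refine ⟨G, ?_, ?_⟩
    · rw [hG a (hball (mem_ball_self hε)).1]; exact hFc
    · intro z hz hzball
      rw [hG z hz]; exact hFfix z hzball
  set A : Set X := {w | w ∈ E \ S ∧ ∃ F : E ≃ₜ E, (F ⟨x, hx.1⟩ : X) = w ∧
    ∀ z : X, ∀ hz : z ∈ E, z ∈ S → (F ⟨z, hz⟩ : X) = z} with hA_def
  set B : Set X := (E \ S) \ A with hB_def
  -- generic: compose a homeo with a local move
  have hSfix : ∀ a ∈ E \ S, ∀ ε > 0, ball a ε ⊆ E \ S →
      ∀ (G : E ≃ₜ E), (∀ z : X, ∀ hz : z ∈ E, z ∉ ball a ε → (G ⟨z, hz⟩ : X) = z) →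
      ∀ z : X, ∀ hz : z ∈ E, z ∈ S → (G ⟨z, hz⟩ : X) = z := by
    intro a ha ε hε hball G hGfix z hz hzS
    exact hGfix z hz (fun hzb => (hball hzb).2 hzS)
  have hAopen : IsOpen A := by
    rw [Metric.isOpen_iff]
    rintro w ⟨hw, F₀, hF₀, hF₀fix⟩
    obtain ⟨ε, hε, hball, hmove⟩ := hloc w hw
    refine ⟨ε, hε, fun b hb => ?_⟩
    obtain ⟨G, hGw, hGfix⟩ := hmove b hb
    refine ⟨hball hb, F₀.trans G, ?_, ?_⟩
    · have h1 : F₀ ⟨x, hx.1⟩ = ⟨w, hw.1⟩ := Subtype.ext hF₀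
      show (G (F₀ ⟨x, hx.1⟩) : X) = b
      rw [h1]; exact hGw
    · intro z hz hzS
      have h1 : F₀ ⟨z, hz⟩ = ⟨z, hz⟩ := Subtype.ext (hF₀fix z hz hzS)
      show (G (F₀ ⟨z, hz⟩) : X) = z
      rw [h1]
      exact hSfix w hw ε hε hball G hGfix z hz hzS
  have hBopen : IsOpen B := by
    rw [Metric.isOpen_iff]
    rintro w ⟨hw, hwA⟩
    obtain ⟨ε, hε, hball, hmove⟩ := hloc w hw
    refine ⟨ε, hε, fun b hb => ⟨hball hb, fun hbA => hwA ?_⟩⟩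
    obtain ⟨hbES, F₁, hF₁, hF₁fix⟩ := hbA
    obtain ⟨G, hGw, hGfix⟩ := hmove b hb
    -- G.symm sends b back to w and fixes S
    have hGsymm_b : (G.symm ⟨b, (hball hb).1⟩ : X) = w := by
      have h1 : G ⟨w, hw.1⟩ = ⟨b, (hball hb).1⟩ := Subtype.ext hGw
      rw [← h1, Homeomorph.symm_apply_apply]
    refine ⟨hw, F₁.trans G.symm, ?_, ?_⟩
    · have h1 : F₁ ⟨x, hx.1⟩ = ⟨b, (hball hb).1⟩ := Subtype.ext hF₁
      show (G.symm (F₁ ⟨x, hx.1⟩) : X) = w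
      rw [h1]; exact hGsymm_b
    · intro z hz hzS
      have hfix : (G ⟨z, hz⟩ : X) = z := hSfix w hw ε hε hball G hGfix z hz hzS
      have h2 : G.symm ⟨z, hz⟩ = ⟨z, hz⟩ := by
        have h3 : G ⟨z, hz⟩ = ⟨z, hz⟩ := Subtype.ext hfix
        calc G.symm ⟨z, hz⟩ = G.symm (G ⟨z, hz⟩) := by rw [h3]
          _ = ⟨z, hz⟩ := G.symm_apply_apply _
      have h1 : F₁ ⟨z, hz⟩ = ⟨z, hz⟩ := Subtype.ext (hF₁fix z hz hzS)
      show (G.symm (F₁ ⟨z, hz⟩) : X) = z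
      rw [h1, h2]
  -- x ∈ A via the identity
  have hxA : x ∈ A :=
    ⟨hx, Homeomorph.refl E, rfl, fun z hz _ => rfl⟩
  -- conclude by preconnectedness
  by_cases hyA : y ∈ A
  · exact hyA.2
  · exfalso
    have hcover : E \ S ⊆ A ∪ B := by
      intro w hw
      by_cases hwA : w ∈ A
      · exact Or.inl hwA
      · exact Or.inr ⟨hw, hwA⟩
    obtain ⟨w, hwES, hwA, hwB⟩ := hconn A B hAopen hBopen hcover
      ⟨x, hx, hxA⟩ ⟨y, hy, hy, hyA⟩
    exact hwB.2 hwA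

/-- Homogeneity lemma (Michor): an open connected subset `E` of the plane admits a
self-homeomorphism sending any list of pairwise distinct points `p i ∈ E` to any other
list of pairwise distinct points `q i ∈ E`. -/
theorem homogeneity_of_open_connected_planar_set
    (E : Set (EuclideanSpace ℝ (Fin 2))) (hE_open : IsOpen E) (hE_conn : IsConnected E)
    (k : ℕ) (p q : Fin k → EuclideanSpace ℝ (Fin 2))
    (hp_mem : ∀ i, p i ∈ E) (hq_mem : ∀ i, q i ∈ E)
    (hp_inj : Function.Injective p) (hq_inj : Function.Injective q) :
    ∃ F : E ≃ₜ E, ∀ i, (F ⟨p i, hp_mem i⟩ : EuclideanSpace ℝ (Fin 2)) = q i := by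
  induction k with
  | zero => exact ⟨Homeomorph.refl E, fun i => i.elim0⟩
  | succ n ih =>
    obtain ⟨F₀, hF₀⟩ := ih (p ∘ Fin.castSucc) (q ∘ Fin.castSucc)
      (fun i => hp_mem _) (fun i => hq_mem _)
      (hp_inj.comp (Fin.castSucc_injective n)) (hq_inj.comp (Fin.castSucc_injective n))
    set S : Set X := Set.range (fun i : Fin n => q (Fin.castSucc i)) with hS_def
    have hS_fin : S.Finite := Set.finite_range _
    set w : X := (F₀ ⟨p (Fin.last n), hp_mem _⟩ : X) with hw_def
    have hwE : w ∈ E := (F₀ ⟨p (Fin.last n), hp_mem _⟩).2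
    have hw : w ∈ E \ S := by
      refine ⟨hwE, ?_⟩
      rintro ⟨i, hi⟩
      have h1 : (F₀ ⟨p (Fin.castSucc i), hp_mem _⟩ : X) = q (Fin.castSucc i) := hF₀ i
      have h2 : F₀ ⟨p (Fin.last n), hp_mem _⟩ = F₀ ⟨p (Fin.castSucc i), hp_mem _⟩ :=
        Subtype.ext (by rw [h1, ← hw_def]; exact hi.symm)
      have h3 : p (Fin.last n) = p (Fin.castSucc i) := by
        have := F₀.injective h2
        exact Subtype.ext_iff.1 this
      have := hp_inj h3
      exact absurd this.symm (Fin.ne_last_of_lt (Fin.castSucc_lt_last i))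
    have hql : q (Fin.last n) ∈ E \ S := by
      refine ⟨hq_mem _, ?_⟩
      rintro ⟨i, hi⟩
      have := hq_inj hi
      exact absurd this (Fin.ne_last_of_lt (Fin.castSucc_lt_last i))
    have hconn : IsPreconnected (E \ S) :=
      isPreconnected_diff_finite hE_open hE_conn.isPreconnected hS_fin
    obtain ⟨G, hG, hGfix⟩ := exists_homeo_fixing hE_open hS_fin hconn hw hql
    refine ⟨F₀.trans G, fun i => ?_⟩
    refine Fin.lastCases ?_ ?_ i
    · show (G (F₀ ⟨p (Fin.last n), hp_mem _⟩) : X) = q (Fin.last n)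
      have h1 : F₀ ⟨p (Fin.last n), hp_mem _⟩ = ⟨w, hw.1⟩ := Subtype.ext rfl
      rw [h1]; exact hG
    · intro j
      show (G (F₀ ⟨p (Fin.castSucc j), hp_mem _⟩) : X) = q (Fin.castSucc j)
      have h1 : F₀ ⟨p (Fin.castSucc j), hp_mem _⟩ = ⟨q (Fin.castSucc j), hq_mem _⟩ :=
        Subtype.ext (hF₀ j)
      rw [h1]
      exact hGfix (q (Fin.castSucc j)) (hq_mem _) ⟨j, rfl⟩
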